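/- Let P = (ℱ,μ) be a probabilistic formula over Ξ^n that is a non-adaptive 2-sided partial (ε/2, δ)-test for a pair (L',L) which is ε-nontrivial. If ℱ' ⊆ ℱ is such that |∪_{(Q,S)∈ℱ'} Q| ≤ εn/2, then μ(ℱ') ≤ 2δ. -/

import Mathlib

open scoped Classical BigOperators

noncomputable section

/-- `w` and `v` differ in more than `ε·n` coordinates. -/
def FarWord {n : ℕ} {Ξ : Type*} (ε : ℝ) (w v : Fin n → Ξ) : Prop :=
  ε * n < ((Finset.univ.filter fun i => w i ≠ v i).card : ℝ)

/-- `w` is `ε`-far from every word of `L`. -/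
def FarFrom {n : ℕ} {Ξ : Type*} (ε : ℝ) (w : Fin n → Ξ) (L : Set (Fin n → Ξ)) : Prop :=
  ∀ v ∈ L, FarWord ε w v

/-- `Q` is a witness against `w` with regard to `L`. -/
def IsWitness {n : ℕ} {Ξ : Type*} (L : Set (Fin n → Ξ)) (w : Fin n → Ξ)
    (Q : Finset (Fin n)) : Prop :=
  ∀ u : Fin n → Ξ, (∀ i ∈ Q, u i = w i) → u ∉ L

/-- `μ` is a probability distribution over subsets of `[n]`. -/
def IsDistr {n : ℕ} (μ : Finset (Fin n) → ℝ) : Prop :=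
  (∀ Q, 0 ≤ μ Q) ∧ ∑ Q : Finset (Fin n), μ Q = 1

/-- The support of a distribution over subsets of `[n]`. -/
def distSupp {n : ℕ} (μ : Finset (Fin n) → ℝ) : Finset (Finset (Fin n)) :=
  Finset.univ.filter fun Q => 0 < μ Q

/-- `μ(𝒜) = Σ_{Q ∈ 𝒜} μ(Q)`. -/
def mass {n : ℕ} (μ : Finset (Fin n) → ℝ) (A : Finset (Finset (Fin n))) : ℝ :=
  ∑ Q ∈ A, μ Q

/-- Probability that a `p`-sampled subset of `[n]` (each index included independently
with probability `p`) satisfies the event `E`. -/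
def sampleProb (n : ℕ) (p : ℝ) (E : Finset (Fin n) → Prop) : ℝ :=
  ∑ R ∈ Finset.univ.filter E, p ^ R.card * (1 - p) ^ (n - R.card)

/-- A non-adaptive 1-sided `(ε,δ)`-test for `L`: a distribution over subsets of `[n]`
that against every `ε`-far word yields a witness with probability at least `1-δ`. -/
def IsOneSidedTest {n : ℕ} {Ξ : Type*} (ε δ : ℝ) (μ : Finset (Fin n) → ℝ)
    (L : Set (Fin n → Ξ)) : Prop :=
  IsDistr μ ∧
    ∀ w : Fin n → Ξ, FarFrom ε w L →
      1 - δ ≤ mass μ (Finset.univ.filter fun Q => IsWitness L w Q)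


/-- A probabilistic formula over `Ξ^n`: a satisfaction function `S Q : Ξ^n → [0,1]`
for every query set `Q ⊆ [n]` (depending only on the restriction to `Q`, i.e., on
`w_Q ∈ Ξ^{|Q|}`), together with a probability distribution `μ` over the query sets. -/
structure ProbFormula (n : ℕ) (Ξ : Type*) where
  S : Finset (Fin n) → (Fin n → Ξ) → ℝ
  μ : Finset (Fin n) → ℝ
  μ_nonneg : ∀ Q, 0 ≤ μ Q
  μ_sum : ∑ Q : Finset (Fin n), μ Q = 1
  S_range : ∀ Q w, 0 ≤ S Q w ∧ S Q w ≤ 1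
  S_local : ∀ Q (w w' : Fin n → Ξ), (∀ i ∈ Q, w i = w' i) → S Q w = S Q w'

namespace ProbFormula

variable {n : ℕ} {Ξ : Type*}

/-- The satisfaction of `P` by `w`: the expectation of `S(w_Q)` for `(Q,S)` drawn
according to `μ`. -/
def sat (P : ProbFormula n Ξ) (w : Fin n → Ξ) : ℝ :=
  ∑ Q : Finset (Fin n), P.μ Q * P.S Q w

/-- The support of the distribution of `P`. -/
def supp (P : ProbFormula n Ξ) : Finset (Finset (Fin n)) :=
  Finset.univ.filter fun Q => 0 < P.μ Q

/-- `P` is a `q`-formula: all query sets in the support have cardinality `q`. -/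
def IsQForm (P : ProbFormula n Ξ) (q : ℕ) : Prop :=
  ∀ Q, 0 < P.μ Q → Q.card = q

/-- `P` is zero-one: all satisfaction functions of constraints in the support take
values in `{0,1}`. -/
def ZeroOne (P : ProbFormula n Ξ) : Prop :=
  ∀ Q, 0 < P.μ Q → ∀ w, P.S Q w = 0 ∨ P.S Q w = 1

/-- `P` is `β`-equitable: `μ(C₁) ≤ β·μ(C₂)` for all constraints in the support. -/
def Equitable (P : ProbFormula n Ξ) (β : ℝ) : Prop :=
  ∀ Q Q', 0 < P.μ Q → 0 < P.μ Q' → P.μ Q ≤ β * P.μ Q'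

/-- `P` is 1-equitable: `μ` is uniform over its support. -/
def Uniform (P : ProbFormula n Ξ) : Prop :=
  ∀ Q Q', 0 < P.μ Q → 0 < P.μ Q' → P.μ Q = P.μ Q'

/-- `P` is combinatorial: zero-one and 1-equitable. -/
def Combinatorial (P : ProbFormula n Ξ) : Prop :=
  P.ZeroOne ∧ P.Uniform

/-- `P` is a non-adaptive 2-sided partial `(ε,δ)`-test for `(L',L)`. -/
def IsPartialTest (P : ProbFormula n Ξ) (ε δ : ℝ) (L' L : Set (Fin n → Ξ)) : Prop :=
  (∀ w ∈ L', 1 - δ ≤ P.sat w) ∧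
  ∀ w : Fin n → Ξ, FarFrom ε w L → P.sat w ≤ δ

end ProbFormula

/-- The pair `(L',L)` is `ε`-nontrivial: `L'` is nonempty and some word of `Ξ^n` is
`ε`-far from `L`. -/
def NontrivialPair {n : ℕ} {Ξ : Type*} (ε : ℝ) (L' L : Set (Fin n → Ξ)) : Prop :=
  L'.Nonempty ∧ ∃ w : Fin n → Ξ, FarFrom ε w L

/-- If `P = (ℱ,μ)` is a non-adaptive 2-sided partial `(ε/2,δ)`-test
for an `ε`-nontrivial pair `(L',L)`, and `ℱ' ⊆ ℱ` is a family of query sets whose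
union occupies at most `εn/2` indexes, then `μ(ℱ') ≤ 2δ`. -/
theorem stmt13 {n : ℕ} {Ξ : Type*} [Fintype Ξ] (ε δ : ℝ)
    (L' L : Set (Fin n → Ξ)) (hLL : L' ⊆ L) (hnt : NontrivialPair ε L' L)
    (P : ProbFormula n Ξ) (htest : P.IsPartialTest (ε/2) δ L' L)
    (F' : Finset (Finset (Fin n)))
    (hcover : ((F'.biUnion id).card : ℝ) ≤ ε * n / 2) :
    mass P.μ F' ≤ 2 * δ := by
  obtain ⟨⟨u, hu⟩, w, hw⟩ := hnt
  set U : Finset (Fin n) := F'.biUnion id with hU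
  set v : Fin n → Ξ := fun i => if i ∈ U then u i else w i with hv
  have hvfar : FarFrom (ε/2) v L := by
    intro z hz
    have hwz := hw z hz
    have hsub : (Finset.univ.filter fun i => w i ≠ z i) ⊆
        (Finset.univ.filter fun i => v i ≠ z i) ∪ U := by
      intro i hi
      simp only [Finset.mem_filter, Finset.mem_univ, true_and] at hi
      by_cases h : i ∈ U
      · exact Finset.mem_union_right _ h
      · refine Finset.mem_union_left _ ?_
        simp [hv, h, hi]
    have h1 := Finset.card_le_card hsub
    have h2 := Finset.card_union_le (Finset.univ.filter fun i => v i ≠ z i) U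
    have hcard : ((Finset.univ.filter fun i => w i ≠ z i).card : ℝ) ≤
        ((Finset.univ.filter fun i => v i ≠ z i).card : ℝ) + U.card := by
      have := h1.trans h2
      exact_mod_cast this
    unfold FarWord at hwz ⊢
    linarith
  have hsv := htest.2 v hvfar
  have hsu := htest.1 u hu
  have heq : ∀ Q ∈ F', P.S Q u = P.S Q v := by
    intro Q hQ
    apply P.S_local
    intro i hi
    have hiU : i ∈ U := Finset.mem_biUnion.2 ⟨Q, hQ, hi⟩
    simp [hv, hiU]
  have e1 : P.sat u - P.sat v =
      ∑ Q ∈ Finset.univ \ F', P.μ Q * (P.S Q u - P.S Q v) := by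
    have := Finset.sum_subset (Finset.sdiff_subset :
        Finset.univ \ F' ⊆ (Finset.univ : Finset (Finset (Fin n))))
      (f := fun Q => P.μ Q * (P.S Q u - P.S Q v)) ?_
    · rw [this]
      unfold ProbFormula.sat
      rw [← Finset.sum_sub_distrib]
      congr 1
      ext Q
      ring
    · intro Q _ hQ
      have hQF : Q ∈ F' := by
        by_contra h
        exact hQ (Finset.mem_sdiff.2 ⟨Finset.mem_univ _, h⟩)
      show P.μ Q * (P.S Q u - P.S Q v) = 0
      rw [heq Q hQF]
      ring
  have e2 : ∑ Q ∈ Finset.univ \ F', P.μ Q * (P.S Q u - P.S Q v) ≤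
      ∑ Q ∈ Finset.univ \ F', P.μ Q := by
    apply Finset.sum_le_sum
    intro Q _
    have h1 := P.S_range Q u
    have h2 := P.S_range Q v
    have hμ := P.μ_nonneg Q
    nlinarith [h1.1, h1.2, h2.1, h2.2]
  have e3 : (∑ Q ∈ Finset.univ \ F', P.μ Q) + ∑ Q ∈ F', P.μ Q =
      ∑ Q : Finset (Fin n), P.μ Q :=
    Finset.sum_sdiff (Finset.subset_univ F')
  have hsum := P.μ_sum
  unfold mass
  linarith
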